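/- Let m ≥ 0, k ≥ 2, 0 ≤ t ≤ k-1, and n = mk + 1 + t. Let G be a connected graph on n vertices in which every edge is contained in a (k+1)-vertex 2⁼-plant or in some 2⁺-plant. Then e(G) ≥ 2n - 2 - m = (2 - 1/k)n + (t+1)/k - 2. -/

import Mathlib

/-- A 2-plant: a graph on an ordered vertex set `v₀ < v₁ < ⋯` (here `Fin m`) such that
`v₀v₁` is an edge and every later vertex has at least 2 earlier neighbours. -/
def IsTwoPlant {m : ℕ} (P : SimpleGraph (Fin m)) : Prop :=
  ∃ h : 2 ≤ m, P.Adj ⟨0, by omega⟩ ⟨1, by omega⟩ ∧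
    ∀ i : Fin m, 2 ≤ (i : ℕ) → 2 ≤ {j : Fin m | j < i ∧ P.Adj j i}.ncard

/-- A 2⁼-plant: every later vertex has exactly 2 earlier neighbours. -/
def IsTwoEqPlant {m : ℕ} (P : SimpleGraph (Fin m)) : Prop :=
  ∃ h : 2 ≤ m, P.Adj ⟨0, by omega⟩ ⟨1, by omega⟩ ∧
    ∀ i : Fin m, 2 ≤ (i : ℕ) → {j : Fin m | j < i ∧ P.Adj j i}.ncard = 2

/-- A 2⁺-plant: a 2-plant where some later vertex has at least 3 earlier neighbours. -/
def IsTwoPlusPlant {m : ℕ} (P : SimpleGraph (Fin m)) : Prop :=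
  IsTwoPlant P ∧ ∃ i : Fin m, 2 ≤ (i : ℕ) ∧ 3 ≤ {j : Fin m | j < i ∧ P.Adj j i}.ncard

/-- The edge `e` of `G` lies in an `m`-vertex 2⁼-plant subgraph of `G`. -/
def EdgeInTwoEqPlant {V : Type*} (G : SimpleGraph V) (m : ℕ) (e : Sym2 V) : Prop :=
  ∃ (P : SimpleGraph (Fin m)) (f : Fin m ↪ V),
    IsTwoEqPlant P ∧ (∀ i j, P.Adj i j → G.Adj (f i) (f j)) ∧
    ∃ i j, P.Adj i j ∧ e = s(f i, f j)

/-- The edge `e` of `G` lies in some 2⁺-plant subgraph of `G`. -/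
def EdgeInTwoPlusPlant {V : Type*} (G : SimpleGraph V) (e : Sym2 V) : Prop :=
  ∃ (m : ℕ) (P : SimpleGraph (Fin m)) (f : Fin m ↪ V),
    IsTwoPlusPlant P ∧ (∀ i j, P.Adj i j → G.Adj (f i) (f j)) ∧
    ∃ i j, P.Adj i j ∧ e = s(f i, f j)

open Finset

section PlantAux

open scoped Classical

variable {s : ℕ} (P : SimpleGraph (Fin s))

noncomputable def pd (i : Fin s) : ℕ := (univ.filter (fun j => j < i ∧ P.Adj j i)).card

noncomputable def pdT (T : Finset (Fin s)) (i : Fin s) : ℕ :=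
  (T.filter (fun j => j < i ∧ P.Adj j i)).card

noncomputable def pe (T : Finset (Fin s)) : Finset (Fin s × Fin s) :=
  (T ×ˢ T).filter (fun p => p.1 < p.2 ∧ P.Adj p.1 p.2)

lemma ncard_eq_pd (i : Fin s) :
    {j : Fin s | j < i ∧ P.Adj j i}.ncard = pd P i := by
  rw [Set.ncard_eq_toFinset_card']
  simp [pd, Set.toFinset_setOf]

lemma pdT_le_pd (T : Finset (Fin s)) (i : Fin s) : pdT P T i ≤ pd P i :=
  Finset.card_le_card (Finset.filter_subset_filter _ (Finset.subset_univ T))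

lemma pe_subset (T : Finset (Fin s)) : pe P T ⊆ pe P univ :=
  Finset.filter_subset_filter _ (by intro p hp; simp)

lemma pe_card (T : Finset (Fin s)) : (pe P T).card = ∑ i ∈ T, pdT P T i := by
  rw [Finset.card_eq_sum_card_fiberwise (f := Prod.snd) (t := T)
    (by intro p hp; simp [pe] at hp; exact hp.1.2)]
  refine Finset.sum_congr rfl fun i hi => ?_
  apply Finset.card_bij (fun p _ => p.1)
  · intro p hp
    simp only [Finset.mem_filter, pe, Finset.mem_product, pdT] at hp ⊢
    obtain ⟨⟨⟨h1, h2⟩, h3, h4⟩, h5⟩ := hp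
    subst h5
    exact ⟨h1, h3, h4⟩
  · intro p hp q hq hpq
    simp only [Finset.mem_filter] at hp hq
    exact Prod.ext hpq (hp.2.trans hq.2.symm)
  · intro j hj
    simp only [Finset.mem_filter, pdT] at hj
    exact ⟨(j, i), by simp [pe, hj.1, hj.2.1, hj.2.2, hi], rfl⟩

lemma pe_empty_of_card_le_one (T : Finset (Fin s)) (hT : T.card ≤ 1) : pe P T = ∅ := by
  rw [Finset.eq_empty_iff_forall_notMem]
  intro p hp
  simp only [pe, Finset.mem_filter, Finset.mem_product] at hp
  exact absurd (Finset.card_le_one.mp hT _ hp.1.1 _ hp.1.2) (ne_of_lt hp.2.1)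

end PlantAux

section PlantAux2

open scoped Classical

variable {s : ℕ} (P : SimpleGraph (Fin s))

lemma fin_bot (hs : 2 ≤ s) (i : Fin s) : (⟨0, by omega⟩ : Fin s) ≤ i := by
  rw [Fin.le_def]; exact Nat.zero_le _

lemma fin_second (hs : 2 ≤ s) (i : Fin s) (hi : i ≠ ⟨0, by omega⟩) :
    (⟨1, by omega⟩ : Fin s) ≤ i := by
  have h0 : i.val ≠ 0 := fun h => hi (Fin.ext h)
  rw [Fin.le_def]
  show 1 ≤ i.val
  omega

lemma pd_ge_two (hP : IsTwoPlant P) (i : Fin s) (hi2 : 2 ≤ (i : ℕ)) : 2 ≤ pd P i := by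
  obtain ⟨hs, h01, hdeg⟩ := hP
  have := hdeg i hi2
  rwa [ncard_eq_pd] at this

lemma pd_ge_two' (hP : IsTwoPlant P) (hs : 2 ≤ s) (i : Fin s)
    (h0 : i ≠ ⟨0, by omega⟩) (h1 : i ≠ ⟨1, by omega⟩) : 2 ≤ pd P i := by
  apply pd_ge_two P hP
  have h0' : i.val ≠ 0 := fun h => h0 (Fin.ext h)
  have h1' : i.val ≠ 1 := fun h => h1 (Fin.ext h)
  omega

lemma pd_ge_one (hP : IsTwoPlant P) (hs : 2 ≤ s) (i : Fin s) (h0 : i ≠ ⟨0, by omega⟩) :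
    1 ≤ pd P i := by
  by_cases h1 : i = ⟨1, by omega⟩
  · subst h1
    rw [Nat.one_le_iff_ne_zero, ← Nat.pos_iff_ne_zero, pd, Finset.card_pos]
    exact ⟨⟨0, by omega⟩, by simp [Fin.lt_def, hP.2.1]⟩
  · exact le_trans (by norm_num) (pd_ge_two' P hP hs i h0 h1)

lemma total_ge (hP : IsTwoPlant P) :
    (2 * s : ℤ) - 3 ≤ ((pe P univ).card : ℤ) := by
  have hs := hP.1
  set z0 : Fin s := ⟨0, by omega⟩
  set z1 : Fin s := ⟨1, by omega⟩
  have hz01 : z1 ≠ z0 := by simp [z0, z1, Fin.ne_iff_vne]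
  have h1 : (pe P univ).card = ∑ i ∈ univ, pdT P univ i := pe_card P univ
  have hsplit0 : ∑ i ∈ univ, pdT P univ i
      = pdT P univ z0 + ∑ i ∈ univ.erase z0, pdT P univ i :=
    (Finset.add_sum_erase _ _ (mem_univ z0)).symm
  have hsplit1 : ∑ i ∈ univ.erase z0, pdT P univ i
      = pdT P univ z1 + ∑ i ∈ (univ.erase z0).erase z1, pdT P univ i :=
    (Finset.add_sum_erase _ _ (Finset.mem_erase.mpr ⟨hz01, mem_univ z1⟩)).symm
  have hcard : ((univ.erase z0).erase z1).card = s - 2 := by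
    rw [Finset.card_erase_of_mem (Finset.mem_erase.mpr ⟨hz01, mem_univ z1⟩),
      Finset.card_erase_of_mem (mem_univ z0), Finset.card_univ, Fintype.card_fin]
    omega
  have hrest : 2 * (s - 2) ≤ ∑ i ∈ (univ.erase z0).erase z1, pdT P univ i := by
    rw [← hcard]
    have := Finset.card_nsmul_le_sum ((univ.erase z0).erase z1) (pdT P univ) 2 ?_
    · simpa [mul_comm] using this
    · intro i hi
      rw [Finset.mem_erase, Finset.mem_erase] at hi
      exact pd_ge_two' P hP hs i hi.2.1 hi.1
  have h1' : 1 ≤ pdT P univ z1 := pd_ge_one P hP hs z1 hz01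
  have hN : 1 + 2 * (s - 2) ≤ (pe P univ).card := by
    rw [h1, hsplit0, hsplit1]; omega
  omega

lemma total_ge_plus (hP : IsTwoPlusPlant P) :
    (2 * s : ℤ) - 2 ≤ ((pe P univ).card : ℤ) := by
  obtain ⟨hP2, i1, hi1, hi1d⟩ := hP
  have hs := hP2.1
  have hs3 : 3 ≤ s := by have := i1.isLt; omega
  rw [ncard_eq_pd] at hi1d
  set z0 : Fin s := ⟨0, by omega⟩
  set z1 : Fin s := ⟨1, by omega⟩
  have hz01 : z1 ≠ z0 := by simp [z0, z1, Fin.ne_iff_vne]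
  have hi1z0 : i1 ≠ z0 := fun h => by rw [h] at hi1; simp [z0] at hi1
  have hi1z1 : i1 ≠ z1 := fun h => by rw [h] at hi1; simp [z1] at hi1
  have h1 : (pe P univ).card = ∑ i ∈ univ, pdT P univ i := pe_card P univ
  have hsplit0 : ∑ i ∈ univ, pdT P univ i
      = pdT P univ z0 + ∑ i ∈ univ.erase z0, pdT P univ i :=
    (Finset.add_sum_erase _ _ (mem_univ z0)).symm
  have hsplit1 : ∑ i ∈ univ.erase z0, pdT P univ i
      = pdT P univ z1 + ∑ i ∈ (univ.erase z0).erase z1, pdT P univ i :=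
    (Finset.add_sum_erase _ _ (Finset.mem_erase.mpr ⟨hz01, mem_univ z1⟩)).symm
  have hi1mem : i1 ∈ (univ.erase z0).erase z1 := by
    rw [Finset.mem_erase, Finset.mem_erase]
    exact ⟨hi1z1, hi1z0, mem_univ i1⟩
  have hsplit2 : ∑ i ∈ (univ.erase z0).erase z1, pdT P univ i
      = pdT P univ i1 + ∑ i ∈ ((univ.erase z0).erase z1).erase i1, pdT P univ i :=
    (Finset.add_sum_erase _ _ hi1mem).symm
  have hcard : (((univ.erase z0).erase z1).erase i1).card = s - 3 := by
    rw [Finset.card_erase_of_mem hi1mem,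
      Finset.card_erase_of_mem (Finset.mem_erase.mpr ⟨hz01, mem_univ z1⟩),
      Finset.card_erase_of_mem (mem_univ z0), Finset.card_univ, Fintype.card_fin]
    omega
  have hrest : 2 * (s - 3) ≤ ∑ i ∈ ((univ.erase z0).erase z1).erase i1, pdT P univ i := by
    rw [← hcard]
    have := Finset.card_nsmul_le_sum (((univ.erase z0).erase z1).erase i1) (pdT P univ) 2 ?_
    · simpa [mul_comm] using this
    · intro i hi
      rw [Finset.mem_erase, Finset.mem_erase, Finset.mem_erase] at hi
      exact pd_ge_two' P hP2 hs i hi.2.2.1 hi.2.1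
  have h1' : 1 ≤ pdT P univ z1 := pd_ge_one P hP2 hs z1 hz01
  have hi1d' : 3 ≤ pdT P univ i1 := hi1d
  have hN : 1 + 3 + 2 * (s - 3) ≤ (pe P univ).card := by
    rw [h1, hsplit0, hsplit1, hsplit2]; omega
  omega

end PlantAux2

section PlantAux3

open scoped Classical

variable {s : ℕ} (P : SimpleGraph (Fin s))

lemma key_one (T : Finset (Fin s)) (hT : T.card ≤ 1) :
    (pe P univ \ pe P T).card = (pe P univ).card := by
  rw [pe_empty_of_card_le_one P T hT, Finset.sdiff_empty]

lemma key_ge (hP : IsTwoPlant P) (T : Finset (Fin s)) (hT : 2 ≤ T.card) :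
    2 * (((univ \ T).card : ℤ)) ≤ ((pe P univ \ pe P T).card : ℤ) := by
  have hs := hP.1
  set z0 : Fin s := ⟨0, by omega⟩ with hz0def
  set z1 : Fin s := ⟨1, by omega⟩ with hz1def
  have hz01 : z1 ≠ z0 := by simp [z0, z1, Fin.ne_iff_vne]
  have hTne : T.Nonempty := Finset.card_pos.mp (by omega)
  set t0 := T.min' hTne with ht0def
  have ht0T : t0 ∈ T := T.min'_mem hTne
  have hT'ne : (T.erase t0).Nonempty := by
    rw [← Finset.card_pos, Finset.card_erase_of_mem ht0T]; omega
  set t1 := (T.erase t0).min' hT'ne with ht1def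
  have ht1T' : t1 ∈ T.erase t0 := Finset.min'_mem _ _
  have ht1T : t1 ∈ T := (Finset.mem_erase.mp ht1T').2
  have ht10 : t1 ≠ t0 := (Finset.mem_erase.mp ht1T').1
  have hmin0 : ∀ j ∈ T, t0 ≤ j := fun j hj => T.min'_le j hj
  have hmin1 : ∀ j ∈ T, j ≠ t0 → t1 ≤ j := fun j hj hj0 =>
    Finset.min'_le _ j (Finset.mem_erase.mpr ⟨hj0, hj⟩)
  -- within bound
  have hpd0 : pdT P T t0 = 0 := by
    rw [pdT, Finset.card_eq_zero, Finset.filter_eq_empty_iff]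
    rintro j hj ⟨hlt, -⟩
    exact absurd (hmin0 j hj) (not_le.mpr hlt)
  have hpd1 : pdT P T t1 ≤ 1 := by
    have hsub : T.filter (fun j => j < t1 ∧ P.Adj j t1) ⊆ {t0} := by
      intro j hj
      rw [Finset.mem_filter] at hj
      rw [Finset.mem_singleton]
      by_contra hne
      exact absurd (hmin1 j hj.1 hne) (not_le.mpr hj.2.1)
    calc pdT P T t1 ≤ ({t0} : Finset (Fin s)).card := Finset.card_le_card hsub
    _ = 1 := Finset.card_singleton t0
  have hwsplit : (pe P T).card
      = pdT P T t0 + (pdT P T t1 + ∑ i ∈ (T.erase t0).erase t1, pdT P T i) := by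
    rw [pe_card, ← Finset.add_sum_erase _ _ ht0T, ← Finset.add_sum_erase _ _ ht1T']
  have hw : ((pe P T).card : ℤ) ≤ 1 + ∑ i ∈ (T.erase t0).erase t1, (pd P i : ℤ) := by
    have hb : ∑ i ∈ (T.erase t0).erase t1, pdT P T i
        ≤ ∑ i ∈ (T.erase t0).erase t1, pd P i :=
      Finset.sum_le_sum fun i _ => pdT_le_pd P T i
    rw [hwsplit]
    push_cast
    have hb' : (∑ i ∈ (T.erase t0).erase t1, (pdT P T i : ℤ))
        ≤ ∑ i ∈ (T.erase t0).erase t1, (pd P i : ℤ) := by exact_mod_cast hb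
    have h0' : (pdT P T t0 : ℤ) = 0 := by exact_mod_cast hpd0
    have h1' : (pdT P T t1 : ℤ) ≤ 1 := by exact_mod_cast hpd1
    linarith
  -- total split
  have ht1univ : t1 ∈ univ.erase t0 := Finset.mem_erase.mpr ⟨ht10, mem_univ t1⟩
  have htotsplit : (pe P univ).card
      = pd P t0 + (pd P t1 + ∑ i ∈ (univ.erase t0).erase t1, pd P i) := by
    rw [pe_card, ← Finset.add_sum_erase _ _ (mem_univ t0), ← Finset.add_sum_erase _ _ ht1univ]
    rfl
  have hsubE : (T.erase t0).erase t1 ⊆ (univ.erase t0).erase t1 :=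
    Finset.erase_subset_erase _ (Finset.erase_subset_erase _ (Finset.subset_univ T))
  have hsdiffeq : ((univ.erase t0).erase t1) \ ((T.erase t0).erase t1) = univ \ T := by
    ext i
    rw [Finset.mem_sdiff, Finset.mem_sdiff]
    constructor
    · rintro ⟨h1, h2⟩
      rw [Finset.mem_erase] at h1
      obtain ⟨hne1, h1'⟩ := h1
      rw [Finset.mem_erase] at h1'
      obtain ⟨hne0, -⟩ := h1'
      refine ⟨Finset.mem_univ i, fun hiT => h2 ?_⟩
      exact Finset.mem_erase.mpr ⟨hne1, Finset.mem_erase.mpr ⟨hne0, hiT⟩⟩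
    · rintro ⟨-, hiT⟩
      refine ⟨Finset.mem_erase.mpr ⟨fun h => hiT (h ▸ ht1T),
        Finset.mem_erase.mpr ⟨fun h => hiT (h ▸ ht0T), Finset.mem_univ i⟩⟩, fun hmem => ?_⟩
      rw [Finset.mem_erase, Finset.mem_erase] at hmem
      exact hiT hmem.2.2
  have hsum : ∑ i ∈ univ \ T, pd P i + ∑ i ∈ (T.erase t0).erase t1, pd P i
      = ∑ i ∈ (univ.erase t0).erase t1, pd P i := by
    rw [← hsdiffeq]
    exact Finset.sum_sdiff hsubE
  -- new edges count
  have hle : (pe P T).card ≤ (pe P univ).card := Finset.card_le_card (pe_subset P T)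
  have hnew : ((pe P univ \ pe P T).card : ℤ)
      = ((pe P univ).card : ℤ) - ((pe P T).card : ℤ) := by
    rw [Finset.card_sdiff_of_subset (pe_subset P T)]
    push_cast [Nat.cast_sub hle]
    ring
  -- lower bound on complement sum
  have hCL : 2 * (((univ \ T).card : ℤ)) - (if z0 ∈ univ \ T then 2 else 0)
      - (if z1 ∈ univ \ T then 1 else 0) ≤ ∑ i ∈ univ \ T, (pd P i : ℤ) := by
    have hpoint : ∀ i ∈ univ \ T,
        (2 : ℤ) - (if i = z0 then 2 else 0) - (if i = z1 then 1 else 0) ≤ (pd P i : ℤ) := by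
      intro i _
      by_cases h0 : i = z0
      · rw [if_pos h0, if_neg (by rw [h0]; exact Ne.symm hz01)]
        omega
      · by_cases h1 : i = z1
        · rw [if_neg h0, if_pos h1]
          have := pd_ge_one P hP hs i h0
          push_cast; omega
        · rw [if_neg h0, if_neg h1]
          have := pd_ge_two' P hP hs i h0 h1
          push_cast; omega
    calc 2 * (((univ \ T).card : ℤ)) - (if z0 ∈ univ \ T then 2 else 0)
          - (if z1 ∈ univ \ T then 1 else 0)
        = ∑ i ∈ univ \ T, ((2 : ℤ) - (if i = z0 then 2 else 0) - (if i = z1 then 1 else 0)) := by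
          rw [Finset.sum_sub_distrib, Finset.sum_sub_distrib, Finset.sum_const,
            Finset.sum_ite_eq' (univ \ T) z0 (fun _ => (2:ℤ)),
            Finset.sum_ite_eq' (univ \ T) z1 (fun _ => (1:ℤ))]
          push_cast
          ring
      _ ≤ ∑ i ∈ univ \ T, (pd P i : ℤ) := Finset.sum_le_sum hpoint
  -- assemble
  have htot' : ((pe P univ).card : ℤ) = (pd P t0 : ℤ) + (pd P t1 : ℤ)
      + (∑ i ∈ univ \ T, (pd P i : ℤ) + ∑ i ∈ (T.erase t0).erase t1, (pd P i : ℤ)) := by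
    rw [htotsplit]
    push_cast
    have : (∑ i ∈ univ \ T, (pd P i : ℤ)) + ∑ i ∈ (T.erase t0).erase t1, (pd P i : ℤ)
        = ∑ i ∈ (univ.erase t0).erase t1, (pd P i : ℤ) := by exact_mod_cast hsum
    linarith
  have ht1z0 : t1 ≠ z0 := by
    by_cases h : z0 ∈ T
    · have : t0 = z0 := le_antisymm (hmin0 z0 h) (fin_bot hs t0)
      exact this ▸ ht10
    · exact fun hh => h (hh ▸ ht1T)
  have hCmem : ∀ z : Fin s, z ∈ univ \ T ↔ z ∉ T := by
    intro z; simp [Finset.mem_sdiff]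
  by_cases hz0T : z0 ∈ T <;> by_cases hz1T : z1 ∈ T
  · -- both in T
    have hd1 : 1 ≤ pd P t1 := pd_ge_one P hP hs t1 ht1z0
    rw [if_neg (fun h => ((hCmem z0).mp h) hz0T), if_neg (fun h => ((hCmem z1).mp h) hz1T)] at hCL
    have hd1' : (1:ℤ) ≤ (pd P t1 : ℤ) := by exact_mod_cast hd1
    have hd0' : (0:ℤ) ≤ (pd P t0 : ℤ) := by positivity
    linarith
  · -- z0 ∈ T, z1 ∉ T
    have ht1z1 : t1 ≠ z1 := fun h => hz1T (h ▸ ht1T)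
    have hd1 : 2 ≤ pd P t1 := pd_ge_two' P hP hs t1 ht1z0 ht1z1
    rw [if_neg (fun h => ((hCmem z0).mp h) hz0T), if_pos ((hCmem z1).mpr hz1T)] at hCL
    have hd1' : (2:ℤ) ≤ (pd P t1 : ℤ) := by exact_mod_cast hd1
    have hd0' : (0:ℤ) ≤ (pd P t0 : ℤ) := by positivity
    linarith
  · -- z0 ∉ T, z1 ∈ T
    have ht0z0 : t0 ≠ z0 := fun h => hz0T (h ▸ ht0T)
    have hd0 : 1 ≤ pd P t0 := pd_ge_one P hP hs t0 ht0z0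
    have ht0z1 : t0 = z1 := le_antisymm (hmin0 z1 hz1T) (fin_second hs t0 ht0z0)
    have ht1z1 : t1 ≠ z1 := ht0z1 ▸ ht10
    have hd1 : 2 ≤ pd P t1 := pd_ge_two' P hP hs t1 ht1z0 ht1z1
    rw [if_pos ((hCmem z0).mpr hz0T), if_neg (fun h => ((hCmem z1).mp h) hz1T)] at hCL
    have hd1' : (2:ℤ) ≤ (pd P t1 : ℤ) := by exact_mod_cast hd1
    have hd0' : (1:ℤ) ≤ (pd P t0 : ℤ) := by exact_mod_cast hd0
    linarith
  · -- both not in T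
    have ht0z0 : t0 ≠ z0 := fun h => hz0T (h ▸ ht0T)
    have ht0z1 : t0 ≠ z1 := fun h => hz1T (h ▸ ht0T)
    have ht1z1 : t1 ≠ z1 := fun h => hz1T (h ▸ ht1T)
    have hd0 : 2 ≤ pd P t0 := pd_ge_two' P hP hs t0 ht0z0 ht0z1
    have hd1 : 2 ≤ pd P t1 := pd_ge_two' P hP hs t1 ht1z0 ht1z1
    rw [if_pos ((hCmem z0).mpr hz0T), if_pos ((hCmem z1).mpr hz1T)] at hCL
    have hd1' : (2:ℤ) ≤ (pd P t1 : ℤ) := by exact_mod_cast hd1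
    have hd0' : (2:ℤ) ≤ (pd P t0 : ℤ) := by exact_mod_cast hd0
    linarith

end PlantAux3

lemma eq_to_two {s : ℕ} {P : SimpleGraph (Fin s)} (h : IsTwoEqPlant P) : IsTwoPlant P := by
  obtain ⟨hs, h01, hd⟩ := h
  exact ⟨hs, h01, fun i hi => (hd i hi).ge⟩

section GraphAux

open scoped Classical

variable {V : Type*} [Fintype V]

noncomputable def eIn (G : SimpleGraph V) (U : Finset V) : ℕ :=
  (G.edgeFinset.filter (fun e => ∀ v ∈ e, v ∈ U)).card

lemma eIn_univ (G : SimpleGraph V) : eIn G univ = G.edgeFinset.card := by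
  unfold eIn
  rw [Finset.filter_true_of_mem]
  intro e _ v _
  exact mem_univ v

lemma eIn_gain (G : SimpleGraph V) (U : Finset V) {s : ℕ} (P : SimpleGraph (Fin s))
    (f : Fin s ↪ V) (hf : ∀ i j, P.Adj i j → G.Adj (f i) (f j)) :
    eIn G U + (pe P univ \ pe P (univ.filter (fun i => f i ∈ U))).card
      ≤ eIn G (U ∪ univ.image f) := by
  set T := univ.filter (fun i : Fin s => f i ∈ U) with hTdef
  set D := pe P univ \ pe P T with hDdef
  set N := D.image (fun p => s(f p.1, f p.2)) with hNdef
  set A := G.edgeFinset.filter (fun e => ∀ v ∈ e, v ∈ U) with hAdef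
  set A' := G.edgeFinset.filter (fun e => ∀ v ∈ e, v ∈ U ∪ univ.image f) with hA'def
  have hDlt : ∀ p ∈ D, p.1 < p.2 ∧ P.Adj p.1 p.2 := by
    intro p hp
    have := (Finset.mem_sdiff.mp hp).1
    simp only [pe, Finset.mem_filter] at this
    exact this.2
  have hinj : Set.InjOn (fun p : Fin s × Fin s => s(f p.1, f p.2)) D := by
    intro p hp q hq hpq
    obtain ⟨hplt, -⟩ := hDlt p hp
    obtain ⟨hqlt, -⟩ := hDlt q hq
    simp only [Sym2.eq_iff] at hpq
    rcases hpq with ⟨h1, h2⟩ | ⟨h1, h2⟩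
    · exact Prod.ext (f.injective h1) (f.injective h2)
    · exfalso
      have e1 : p.1 = q.2 := f.injective h1
      have e2 : p.2 = q.1 := f.injective h2
      rw [e1, e2] at hplt
      exact absurd hqlt (not_lt.mpr hplt.le)
  have hNcard : N.card = D.card := Finset.card_image_of_injOn hinj
  have hNsub : N ⊆ A' := by
    intro e he
    obtain ⟨p, hp, rfl⟩ := Finset.mem_image.mp he
    obtain ⟨hplt, hpadj⟩ := hDlt p hp
    rw [hA'def, Finset.mem_filter]
    constructor
    · rw [SimpleGraph.mem_edgeFinset, SimpleGraph.mem_edgeSet]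
      exact hf _ _ hpadj
    · intro v hv
      rw [Sym2.mem_iff] at hv
      apply Finset.mem_union_right
      rcases hv with rfl | rfl <;> exact Finset.mem_image_of_mem f (mem_univ _)
  have hAsub : A ⊆ A' := by
    intro e he
    rw [hAdef, Finset.mem_filter] at he
    rw [hA'def, Finset.mem_filter]
    exact ⟨he.1, fun v hv => Finset.mem_union_left _ (he.2 v hv)⟩
  have hdisj : Disjoint A N := by
    rw [Finset.disjoint_left]
    intro e heA heN
    obtain ⟨p, hp, rfl⟩ := Finset.mem_image.mp heN
    obtain ⟨hpuniv, hpT⟩ := Finset.mem_sdiff.mp hp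
    obtain ⟨hplt, hpadj⟩ := hDlt p hp
    rw [hAdef, Finset.mem_filter] at heA
    have h1 : f p.1 ∈ U := heA.2 _ (Sym2.mem_mk_left _ _)
    have h2 : f p.2 ∈ U := heA.2 _ (Sym2.mem_mk_right _ _)
    have hm1 : p.1 ∈ T := Finset.mem_filter.mpr ⟨mem_univ _, h1⟩
    have hm2 : p.2 ∈ T := Finset.mem_filter.mpr ⟨mem_univ _, h2⟩
    apply hpT
    unfold pe
    exact Finset.mem_filter.mpr ⟨Finset.mem_product.mpr ⟨hm1, hm2⟩, hplt, hpadj⟩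
  calc eIn G U + D.card = A.card + N.card := by rw [hNcard]; rfl
    _ = (A ∪ N).card := (Finset.card_union_of_disjoint hdisj).symm
    _ ≤ A'.card := Finset.card_le_card (Finset.union_subset hAsub hNsub)
    _ = eIn G (U ∪ univ.image f) := rfl

lemma card_union_im (U : Finset V) {s : ℕ} (f : Fin s ↪ V) :
    (U ∪ univ.image f).card
      = U.card + (univ \ univ.filter (fun i : Fin s => f i ∈ U)).card := by
  have h1 : (univ.image f \ U) = (univ \ univ.filter (fun i : Fin s => f i ∈ U)).image f := by
    ext a
    simp only [Finset.mem_sdiff, Finset.mem_image, Finset.mem_univ, true_and,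
      Finset.mem_filter]
    constructor
    · rintro ⟨⟨i, rfl⟩, ha⟩
      exact ⟨i, ha, rfl⟩
    · rintro ⟨i, hi, rfl⟩
      exact ⟨⟨i, rfl⟩, hi⟩
  have h2 : ((univ \ univ.filter (fun i : Fin s => f i ∈ U)).image f).card
      = (univ \ univ.filter (fun i : Fin s => f i ∈ U)).card :=
    Finset.card_image_of_injective _ f.injective
  rw [Finset.union_comm, ← Finset.card_sdiff_add_card, h1, h2, add_comm]

lemma walk_cross (G : SimpleGraph V) (U : Finset V) :
    ∀ {u w : V}, G.Walk u w → u ∈ U → w ∉ U → ∃ x y, x ∈ U ∧ y ∉ U ∧ G.Adj x y := by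
  intro u w p
  induction p with
  | nil => intro h1 h2; exact absurd h1 h2
  | @cons u v w h p ih =>
    intro hu hw
    by_cases hv : v ∈ U
    · exact ih hv hw
    · exact ⟨u, v, hu, hv, h⟩

end GraphAux

section Main

open scoped Classical

variable {V : Type*} [Fintype V]

lemma step_lemma (G : SimpleGraph V) {s : ℕ} (P : SimpleGraph (Fin s)) (f : Fin s ↪ V)
    (hP : IsTwoPlant P)
    (hf : ∀ i j, P.Adj i j → G.Adj (f i) (f j)) (U : Finset V)
    {x y : V} (hxU : x ∈ U) (hyU : y ∉ U) {i0 j0 : Fin s} (hadj : P.Adj i0 j0)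
    (hsym : s(x, y) = s(f i0, f j0)) :
    ∃ (U' : Finset V) (a : ℕ), U ⊆ U' ∧ U'.card = U.card + a ∧ 1 ≤ a ∧
      ((eIn G U : ℤ) + 2 * a ≤ (eIn G U' : ℤ) ∨
       (a = s - 1 ∧ (eIn G U : ℤ) + ((pe P univ).card : ℤ) ≤ (eIn G U' : ℤ))) := by
  set T := univ.filter (fun i : Fin s => f i ∈ U) with hTdef
  set U' := U ∪ univ.image f with hU'def
  set a := (univ \ T).card with hadef
  have hcardU' : U'.card = U.card + a := card_union_im U f
  have hsub : U ⊆ U' := Finset.subset_union_left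
  have hxy' : (x = f i0 ∧ y = f j0) ∨ (x = f j0 ∧ y = f i0) := Sym2.eq_iff.mp hsym
  have hTpos : 1 ≤ T.card := by
    rw [Nat.one_le_iff_ne_zero, ← Nat.pos_iff_ne_zero, Finset.card_pos]
    rcases hxy' with ⟨hx, -⟩ | ⟨hx, -⟩
    · exact ⟨i0, Finset.mem_filter.mpr ⟨mem_univ _, hx ▸ hxU⟩⟩
    · exact ⟨j0, Finset.mem_filter.mpr ⟨mem_univ _, hx ▸ hxU⟩⟩
  have hapos : 1 ≤ a := by
    rw [hadef, Nat.one_le_iff_ne_zero, ← Nat.pos_iff_ne_zero, Finset.card_pos]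
    rcases hxy' with ⟨-, hy⟩ | ⟨-, hy⟩
    · exact ⟨j0, Finset.mem_sdiff.mpr ⟨mem_univ _,
        fun hmem => hyU (hy ▸ (Finset.mem_filter.mp hmem).2)⟩⟩
    · exact ⟨i0, Finset.mem_sdiff.mpr ⟨mem_univ _,
        fun hmem => hyU (hy ▸ (Finset.mem_filter.mp hmem).2)⟩⟩
  have hgain : eIn G U + (pe P univ \ pe P T).card ≤ eIn G U' := eIn_gain G U P f hf
  refine ⟨U', a, hsub, hcardU', hapos, ?_⟩
  by_cases hT2 : 2 ≤ T.card
  · left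
    have hkey := key_ge P hP T hT2
    have hgain' : (eIn G U : ℤ) + ((pe P univ \ pe P T).card : ℤ) ≤ (eIn G U' : ℤ) := by
      exact_mod_cast hgain
    rw [← hadef] at hkey
    linarith
  · right
    have hT1 : T.card = 1 := by omega
    have hone := key_one P T (by omega)
    constructor
    · rw [hadef, Finset.card_sdiff_of_subset (Finset.subset_univ T), Finset.card_univ,
        Fintype.card_fin, hT1]
    · have hgain' : (eIn G U : ℤ) + ((pe P univ \ pe P T).card : ℤ) ≤ (eIn G U' : ℤ) := by
        exact_mod_cast hgain
      rw [hone] at hgain'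
      exact hgain'

lemma grow (G : SimpleGraph V) (k : ℕ) (hk : 2 ≤ k) (hconn : G.Connected)
    (hedges : ∀ e ∈ G.edgeSet, EdgeInTwoEqPlant G (k + 1) e ∨ EdgeInTwoPlusPlant G e) :
    ∀ d (U : Finset V), U.Nonempty → Fintype.card V ≤ U.card + d →
      ∃ c : ℕ, (c * k : ℤ) ≤ (Fintype.card V : ℤ) - U.card ∧
        (eIn G univ : ℤ) ≥ (eIn G U : ℤ) + 2 * ((Fintype.card V : ℤ) - (U.card : ℤ)) - c := by
  intro d
  induction d with
  | zero =>
    intro U hUne hcard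
    have hUcard : U.card = Fintype.card V := le_antisymm (Finset.card_le_univ U) (by omega)
    have hU : U = univ := Finset.eq_univ_of_card U hUcard
    refine ⟨0, ?_, ?_⟩ <;> rw [hU, Finset.card_univ] <;> push_cast <;> linarith
  | succ d ih =>
    intro U hUne hcard
    by_cases hUuniv : U = univ
    · refine ⟨0, ?_, ?_⟩ <;> rw [hUuniv, Finset.card_univ] <;> push_cast <;> linarith
    · have hwex : ∃ w, w ∉ U := by
        by_contra h
        push_neg at h
        exact hUuniv (Finset.eq_univ_iff_forall.mpr h)
      obtain ⟨w, hwU⟩ := hwex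
      obtain ⟨u, huU⟩ := hUne
      obtain ⟨x, y, hxU, hyU, hxy⟩ :=
        walk_cross G U ((hconn.preconnected u w).some) huU hwU
      have he : s(x, y) ∈ G.edgeSet := G.mem_edgeSet.mpr hxy
      have hNle : (U.card : ℤ) ≤ (Fintype.card V : ℤ) := by
        exact_mod_cast Finset.card_le_univ U
      rcases hedges _ he with ⟨P, f, hP, hf, i0, j0, hadj, hsym⟩
        | ⟨s', P, f, hP, hf, i0, j0, hadj, hsym⟩
      · -- (k+1)-vertex 2⁼-plant
        obtain ⟨U', a, hsub, hcardU', hapos, hcase⟩ :=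
          step_lemma G P f (eq_to_two hP) hf U hxU hyU hadj hsym
        obtain ⟨c', hc1, hc2⟩ := ih U' ⟨u, hsub huU⟩ (by omega)
        have hcast : (U'.card : ℤ) = (U.card : ℤ) + (a : ℤ) := by exact_mod_cast hcardU'
        rcases hcase with hgain | ⟨ha, hgain⟩
        · refine ⟨c', ?_, ?_⟩
          · have ha0 : (0 : ℤ) ≤ (a : ℤ) := by positivity
            linarith
          · have ha0 : (0 : ℤ) ≤ (a : ℤ) := by positivity
            linarith
        · have hak : a = k := by omega
          have htot := total_ge P (eq_to_two hP)
          refine ⟨c' + 1, ?_, ?_⟩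
          · push_cast
            rw [hak] at hcast
            linarith
          · rw [hak] at hcast
            push_cast
            push_cast at htot
            linarith
      · -- 2⁺-plant
        obtain ⟨U', a, hsub, hcardU', hapos, hcase⟩ :=
          step_lemma G P f hP.1 hf U hxU hyU hadj hsym
        obtain ⟨c', hc1, hc2⟩ := ih U' ⟨u, hsub huU⟩ (by omega)
        have hcast : (U'.card : ℤ) = (U.card : ℤ) + (a : ℤ) := by exact_mod_cast hcardU'
        rcases hcase with hgain | ⟨ha, hgain⟩
        · refine ⟨c', ?_, ?_⟩
          · have ha0 : (0 : ℤ) ≤ (a : ℤ) := by positivity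
            linarith
          · have ha0 : (0 : ℤ) ≤ (a : ℤ) := by positivity
            linarith
        · have hs2 : 2 ≤ s' := hP.1.1
          have haz : (a : ℤ) = (s' : ℤ) - 1 := by
            rw [ha]; push_cast [Nat.cast_sub (by omega : 1 ≤ s')]; ring
          have htot := total_ge_plus P hP
          refine ⟨c', ?_, ?_⟩
          · linarith
          · linarith

end Main


/-- let `m ≥ 0`, `k ≥ 2`, `0 ≤ t ≤ k-1`, and let `G` be a connected graph on
`n = mk+1+t` vertices in which every edge lies in a `(k+1)`-vertex 2⁼-plant or in some
2⁺-plant. Then `e(G) ≥ 2n - 2 - m = (2 - 1/k)n + (t+1)/k - 2`. -/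
theorem stmt8 {V : Type*} [Fintype V] (G : SimpleGraph V)
    (m k t : ℕ) (hk : 2 ≤ k) (ht : t ≤ k - 1)
    (hn : Fintype.card V = m * k + 1 + t)
    (hconn : G.Connected)
    (hedges : ∀ e ∈ G.edgeSet, EdgeInTwoEqPlant G (k + 1) e ∨ EdgeInTwoPlusPlant G e) :
    (Nat.card G.edgeSet : ℤ) ≥ 2 * (m * k + 1 + t : ℤ) - 2 - m ∧
    (2 * ((m * k + 1 + t : ℕ) : ℝ) - 2 - m
      = (2 - 1 / (k : ℝ)) * ((m * k + 1 + t : ℕ) : ℝ) + ((t : ℝ) + 1) / k - 2) := by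
  classical
  constructor
  · have hVpos : 0 < Fintype.card V := by omega
    obtain ⟨v⟩ := Fintype.card_pos_iff.mp hVpos
    obtain ⟨c, hc1, hc2⟩ := grow G k hk hconn hedges (Fintype.card V - 1) {v}
      ⟨v, Finset.mem_singleton_self v⟩ (by rw [Finset.card_singleton]; omega)
    rw [Finset.card_singleton] at hc1 hc2
    have hck : c * k ≤ m * k + t := by
      have h := hc1
      rw [hn] at h
      push_cast at h
      exact_mod_cast (by linarith : (c * k : ℤ) ≤ (m : ℤ) * k + t)
    have hcm : c ≤ m := by
      by_contra h
      push_neg at h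
      have h2 : (m + 1) * k ≤ c * k := Nat.mul_le_mul_right k (by omega)
      rw [add_mul, one_mul] at h2
      omega
    have hedgecard : (Nat.card G.edgeSet) = eIn G univ := by
      rw [Nat.card_coe_set_eq, Set.ncard_eq_toFinset_card', eIn_univ]
      congr 1
    rw [hedgecard]
    rw [hn] at hc2
    push_cast at hc2
    have h0 : (0 : ℤ) ≤ (eIn G {v} : ℤ) := by positivity
    have hcm' : (c : ℤ) ≤ (m : ℤ) := by exact_mod_cast hcm
    linarith
  · have hk0 : (k : ℝ) ≠ 0 := Nat.cast_ne_zero.mpr (by omega)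
    field_simp
    push_cast
    ring
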